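/- arXiv:1012.4827 — 3 statements merged into one kernel-verified Lean document; each statement's English description precedes it below -/
import Mathlib

section
/- Let g be a complex Lie algebra acting by derivations on a commutative Hopf algebra F over ℂ such that ε(X▷f)=0 for every X∈g and f∈F. Then the bracket [X⊗f, Y⊗g] := [X,Y]⊗fg + Y⊗ε(f)(X▷g) − X⊗ε(g)(Y▷f) endows the vector space g⊗F with a Lie algebra structure (it is antisymmetric and satisfies the Jacobi identity). -/
/-!
STATEMENT 0: Let `g` be a complex Lie algebra acting by derivations on a commutative
Hopf algebra `F` over `ℂ` such that `ε(X ▷ f) = 0` for every `X ∈ g`, `f ∈ F`.  Then the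
bracket `[X⊗f, Y⊗k] = [X,Y] ⊗ f*k + Y ⊗ ε(f)•(X▷k) − X ⊗ ε(k)•(Y▷f)` endows the vector
space `g ⊗ F` with a Lie algebra structure (it is antisymmetric and satisfies the Jacobi
identity).
-/

open scoped TensorProduct
open TensorProduct

attribute [local instance 100] LieRing.ofAssociativeRing

noncomputable section

theorem bracket_on_tensor_is_lie_algebra
    {g : Type} [LieRing g] [LieAlgebra ℂ g]
    {F : Type} [CommRing F] [HopfAlgebra ℂ F]
    -- `g` acts on `F` (a Lie algebra map into endomorphisms of `F`) ...
    (act : g →ₗ⁅ℂ⁆ Module.End ℂ F)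
    -- ... by derivations,
    (hder : ∀ (X : g) (f k : F), act X (f * k) = act X f * k + f * act X k)
    -- and `ε (X ▷ f) = 0` for all `X ∈ g`, `f ∈ F`.
    (hcounit : ∀ (X : g) (f : F), Coalgebra.counit (R := ℂ) (act X f) = 0)
    -- The bracket of the statement, as a bilinear map on `g ⊗ F`:
    (B : g ⊗[ℂ] F →ₗ[ℂ] g ⊗[ℂ] F →ₗ[ℂ] g ⊗[ℂ] F)
    (hB : ∀ (X Y : g) (f k : F),
      B (X ⊗ₜ[ℂ] f) (Y ⊗ₜ[ℂ] k) =
        ⁅X, Y⁆ ⊗ₜ[ℂ] (f * k)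
          + Y ⊗ₜ[ℂ] ((Coalgebra.counit (R := ℂ) f) • act X k)
          - X ⊗ₜ[ℂ] ((Coalgebra.counit (R := ℂ) k) • act Y f)) :
    -- Conclusion: the bracket is antisymmetric and satisfies the Jacobi identity,
    -- i.e. it endows `g ⊗ F` with a Lie algebra structure.
    (∀ a b : g ⊗[ℂ] F, B a b = - B b a) ∧
    (∀ a b c : g ⊗[ℂ] F, B (B a b) c + B (B b c) a + B (B c a) b = 0) := by
  constructor
  · -- antisymmetry
    have key : ∀ (X Y : g) (f k : F),
        B (X ⊗ₜ[ℂ] f) (Y ⊗ₜ[ℂ] k) = - B (Y ⊗ₜ[ℂ] k) (X ⊗ₜ[ℂ] f) := by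
      intro X Y f k
      rw [hB, hB, mul_comm k f, ← lie_skew Y X]
      simp only [neg_tmul]
      abel
    intro a b
    induction a using TensorProduct.induction_on with
    | zero => simp
    | tmul X f =>
      induction b using TensorProduct.induction_on with
      | zero => simp
      | tmul Y k => exact key X Y f k
      | add x y hx hy =>
        simp only [map_add, LinearMap.add_apply, hx, hy]
        abel
    | add x y hx hy =>
      simp only [map_add, LinearMap.add_apply, hx, hy]
      abel
  · -- Jacobi identity
    have key : ∀ (X Y Z : g) (f k h : F),
        B (B (X ⊗ₜ[ℂ] f) (Y ⊗ₜ[ℂ] k)) (Z ⊗ₜ[ℂ] h)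
          + B (B (Y ⊗ₜ[ℂ] k) (Z ⊗ₜ[ℂ] h)) (X ⊗ₜ[ℂ] f)
          + B (B (Z ⊗ₜ[ℂ] h) (X ⊗ₜ[ℂ] f)) (Y ⊗ₜ[ℂ] k) = 0 := by
      intro X Y Z f k h
      simp only [hB, tmul_smul, map_add, map_sub, map_smul, LinearMap.add_apply,
        LinearMap.sub_apply, LinearMap.smul_apply, hB, Bialgebra.counit_mul, hcounit,
        hder, LieHom.map_lie, Ring.lie_def, Module.End.mul_apply, LinearMap.sub_apply,
        map_smul, smul_eq_mul, zero_smul, smul_zero, zero_tmul, tmul_zero, mul_zero,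
        zero_mul, tmul_add, add_tmul, tmul_sub, sub_tmul, ← smul_tmul', smul_smul,
        add_zero, zero_add, sub_zero, smul_lie, lie_smul]
      have jac0 : ⁅⁅Z, X⁆, Y⁆ + (⁅⁅X, Y⁆, Z⁆ + ⁅⁅Y, Z⁆, X⁆) = 0 := by
        have hj := lie_jacobi X Y Z
        rw [← lie_skew X ⁅Y,Z⁆, ← lie_skew Y ⁅Z,X⁆, ← lie_skew Z ⁅X,Y⁆, ← neg_add,
          ← neg_add, neg_eq_zero] at hj
        rw [← hj]; abel
      have jac := eq_neg_of_add_eq_zero_left jac0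
      rw [neg_add] at jac
      rw [jac, ← lie_skew Y X, ← lie_skew Z Y, ← lie_skew X Z]
      simp only [neg_lie, lie_neg, neg_neg, neg_tmul, tmul_neg, smul_neg, add_tmul,
        smul_sub, smul_add]
      ring_nf
      module
    -- linearity helpers for the trilinear Jacobi expression
    have Jz1 : ∀ (b c : g ⊗[ℂ] F),
        B (B 0 b) c + B (B b c) 0 + B (B c 0) b = 0 := by
      intro b c; simp
    have Jz2 : ∀ (a c : g ⊗[ℂ] F),
        B (B a 0) c + B (B 0 c) a + B (B c a) 0 = 0 := by
      intro a c; simp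
    have Jz3 : ∀ (a b : g ⊗[ℂ] F),
        B (B a b) 0 + B (B b 0) a + B (B 0 a) b = 0 := by
      intro a b; simp
    have Ja1 : ∀ (x y b c : g ⊗[ℂ] F),
        B (B (x + y) b) c + B (B b c) (x + y) + B (B c (x + y)) b =
          (B (B x b) c + B (B b c) x + B (B c x) b)
            + (B (B y b) c + B (B b c) y + B (B c y) b) := by
      intro x y b c
      simp only [map_add, LinearMap.add_apply]; abel
    have Ja2 : ∀ (a x y c : g ⊗[ℂ] F),
        B (B a (x + y)) c + B (B (x + y) c) a + B (B c a) (x + y) =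
          (B (B a x) c + B (B x c) a + B (B c a) x)
            + (B (B a y) c + B (B y c) a + B (B c a) y) := by
      intro a x y c
      simp only [map_add, LinearMap.add_apply]; abel
    have Ja3 : ∀ (a b x y : g ⊗[ℂ] F),
        B (B a b) (x + y) + B (B b (x + y)) a + B (B (x + y) a) b =
          (B (B a b) x + B (B b x) a + B (B x a) b)
            + (B (B a b) y + B (B b y) a + B (B y a) b) := by
      intro a b x y
      simp only [map_add, LinearMap.add_apply]; abel
    intro a b c
    induction a using TensorProduct.induction_on with
    | zero => exact Jz1 b c
    | add x y hx hy => rw [Ja1, hx, hy, add_zero]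
    | tmul X f =>
      induction b using TensorProduct.induction_on with
      | zero => exact Jz2 _ c
      | add x y hx hy => rw [Ja2, hx, hy, add_zero]
      | tmul Y k =>
        induction c using TensorProduct.induction_on with
        | zero => exact Jz3 _ _
        | add x y hx hy => rw [Ja3, hx, hy, add_zero]
        | tmul Z h => exact key X Y Z f k h
end
end

section
/- Let g be a finite-dimensional complex Lie algebra acting by derivations on a commutative Hopf algebra F with ε(X▷f)=0 for all X∈g, f∈F, and let ▽: g → g⊗F be a right F-coaction on g. Then ▽ satisfies the structure identity of g if and only if ▽ is a morphism of Lie algebras, where g⊗F carries the bracket [X⊗f, Y⊗g] = [X,Y]⊗fg + Y⊗ε(f)(X▷g) − X⊗ε(g)(Y▷f). -/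
/-!
STATEMENT 1: Let `g` be a finite-dimensional complex Lie algebra acting by derivations
on a commutative Hopf algebra `F` with `ε(X▷f) = 0`, and let `▽ : g → g ⊗ F` be a right
`F`-coaction on `g`.  Then `▽` satisfies the structure identity of `g` if and only if
`▽` is a morphism of Lie algebras, where `g ⊗ F` carries the bracket
`[X⊗f, Y⊗k] = [X,Y]⊗f k + Y⊗ε(f)(X▷k) − X⊗ε(k)(Y▷f)`.
-/

open scoped TensorProduct
open TensorProduct

noncomputable section

attribute [local instance] LieRing.ofAssociativeRing

theorem structure_identity_iff_lie_algebra_map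
    {g : Type} [LieRing g] [LieAlgebra ℂ g] [FiniteDimensional ℂ g]
    {F : Type} [CommRing F] [HopfAlgebra ℂ F]
    -- the action of `g` on `F` by derivations with `ε (X ▷ f) = 0`:
    (act : g →ₗ⁅ℂ⁆ Module.End ℂ F)
    (hder : ∀ (X : g) (f k : F), act X (f * k) = act X f * k + f * act X k)
    (hcounit : ∀ (X : g) (f : F), Coalgebra.counit (R := ℂ) (act X f) = 0)
    -- `▽ : g → g ⊗ F` is a right `F`-coaction:
    (cov : g →ₗ[ℂ] g ⊗[ℂ] F)
    (hcov_counit : (TensorProduct.rid ℂ g).toLinearMap ∘ₗ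
        (LinearMap.lTensor g (Coalgebra.counit (R := ℂ) (A := F))) ∘ₗ cov = LinearMap.id)
    (hcov_coassoc : (TensorProduct.assoc ℂ g F F).toLinearMap ∘ₗ
        (LinearMap.rTensor F cov) ∘ₗ cov =
      (LinearMap.lTensor g (Coalgebra.comul (R := ℂ) (A := F))) ∘ₗ cov)
    -- a basis of `g`, the first-order matrix coefficients `f_i^j` of `▽` and
    -- the structure constants `C^k_{i,j}` of `g`:
    {m : ℕ} (b : Module.Basis (Fin m) ℂ g)
    (φ : Fin m → Fin m → F)
    (hφ : ∀ i, cov (b i) = ∑ j, b j ⊗ₜ[ℂ] φ i j)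
    (C : Fin m → Fin m → Fin m → ℂ)
    (hC : ∀ i j, ⁅b i, b j⁆ = ∑ k, C i j k • b k)
    -- the bracket on `g ⊗ F`:
    (B : g ⊗[ℂ] F →ₗ[ℂ] g ⊗[ℂ] F →ₗ[ℂ] g ⊗[ℂ] F)
    (hB : ∀ (X Y : g) (f k : F),
      B (X ⊗ₜ[ℂ] f) (Y ⊗ₜ[ℂ] k) =
        ⁅X, Y⁆ ⊗ₜ[ℂ] (f * k)
          + Y ⊗ₜ[ℂ] ((Coalgebra.counit (R := ℂ) f) • act X k)
          - X ⊗ₜ[ℂ] ((Coalgebra.counit (R := ℂ) k) • act Y f)) :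
    -- Conclusion: the structure identity
    --   `f^k_{j,i} − f^k_{i,j} = Σ_{s,r} C^k_{s,r} f_i^r f_j^s + Σ_l C^l_{i,j} f_l^k`
    -- holds if and only if `▽` is a map of Lie algebras.
    (∀ i j k : Fin m,
        act (b i) (φ j k) - act (b j) (φ i k) =
          (∑ s, ∑ r, C s r k • (φ i r * φ j s)) + ∑ l, C i j l • φ l k) ↔
      (∀ X Y : g, cov ⁅X, Y⁆ = B (cov X) (cov Y)) := by
  classical
  -- coefficients w.r.t. the basis are determined
  have hcoeff : ∀ (u v : Fin m → ℂ), (∑ t, u t • b t) = (∑ t, v t • b t) → ∀ t, u t = v t := by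
    intro u v h t
    have hz : (∑ t, (u t - v t) • b t) = 0 := by
      simp only [sub_smul, Finset.sum_sub_distrib, h, sub_self]
    exact sub_eq_zero.mp
      (Fintype.linearIndependent_iff.mp b.linearIndependent (fun t => u t - v t) hz t)
  -- counit of the matrix coefficients
  have hε : ∀ i j, Coalgebra.counit (R := ℂ) (φ i j) = if j = i then 1 else 0 := by
    intro i j
    have h := DFunLike.congr_fun hcov_counit (b i)
    simp only [LinearMap.comp_apply, LinearMap.id_apply, hφ, map_sum,
      LinearMap.lTensor_tmul, TensorProduct.rid_tmul, LinearEquiv.coe_coe] at h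
    have hbi : (b i : g) = ∑ t, (if t = i then (1 : ℂ) else 0) • b t := by
      simp
    exact hcoeff _ _ (h.trans hbi) j
  -- antisymmetry of the structure constants
  have hanti : ∀ a c k, C a c k = - C c a k := by
    intro a c k
    have h : (∑ t, C a c t • b t) = ∑ t, (- C c a t) • b t := by
      rw [← hC a c, ← lie_skew, hC c a, ← Finset.sum_neg_distrib]
      simp [neg_smul]
    exact hcoeff _ _ h k
  -- component extraction maps
  set e : Fin m → (g ⊗[ℂ] F →ₗ[ℂ] F) := fun k =>
    (TensorProduct.lid ℂ F).toLinearMap ∘ₗ LinearMap.rTensor F (b.coord k) with he_def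
  have he : ∀ (u : Fin m → F) (k : Fin m), e k (∑ t, b t ⊗ₜ[ℂ] u t) = u k := by
    intro u k
    simp only [he_def, LinearMap.comp_apply, map_sum, LinearMap.rTensor_tmul,
      Module.Basis.coord_apply, Module.Basis.repr_self, LinearEquiv.coe_coe, TensorProduct.lid_tmul]
    rw [Finset.sum_congr rfl (fun t _ => by
      rw [show (Finsupp.single t (1 : ℂ)) k • u t = if t = k then u t else 0 by
        by_cases h : t = k <;> simp [h, Finsupp.single_apply]])]
    simp
  -- canonical form of the left-hand side
  have hLHS : ∀ i j, cov ⁅b i, b j⁆ = ∑ k, b k ⊗ₜ[ℂ] (∑ l, C i j l • φ l k) := by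
    intro i j
    rw [hC i j, map_sum]
    simp only [map_smul, hφ, Finset.smul_sum, TensorProduct.tmul_smul]
    rw [Finset.sum_comm]
    simp [TensorProduct.tmul_sum]
  -- canonical form of the right-hand side
  have hRHS : ∀ i j, B (cov (b i)) (cov (b j)) =
      ∑ k, b k ⊗ₜ[ℂ] ((∑ r, ∑ s, C r s k • (φ i r * φ j s))
        + act (b i) (φ j k) - act (b j) (φ i k)) := by
    intro i j
    have expand : B (cov (b i)) (cov (b j))
        = ∑ s, ∑ r, B (b r ⊗ₜ[ℂ] φ i r) (b s ⊗ₜ[ℂ] φ j s) := by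
      rw [hφ i, hφ j, map_sum]
      refine Finset.sum_congr rfl fun s _ => ?_
      rw [map_sum, LinearMap.sum_apply]
    rw [expand, Finset.sum_comm]
    simp only [hB, hε]
    have triple : ∀ (f : Fin m → Fin m → Fin m → g ⊗[ℂ] F),
        (∑ r, ∑ s, ∑ k, f r s k) = ∑ k, ∑ r, ∑ s, f r s k := by
      intro f
      calc (∑ r, ∑ s, ∑ k, f r s k) = ∑ r, ∑ k, ∑ s, f r s k :=
            Finset.sum_congr rfl fun r _ => Finset.sum_comm
        _ = ∑ k, ∑ r, ∑ s, f r s k := Finset.sum_comm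
    have hP1 : (∑ r, ∑ s, (⁅b r, b s⁆ ⊗ₜ[ℂ] (φ i r * φ j s) : g ⊗[ℂ] F))
        = ∑ k, b k ⊗ₜ[ℂ] (∑ r, ∑ s, C r s k • (φ i r * φ j s)) := by
      calc (∑ r, ∑ s, (⁅b r, b s⁆ ⊗ₜ[ℂ] (φ i r * φ j s) : g ⊗[ℂ] F))
          = ∑ r, ∑ s, ∑ k, (b k ⊗ₜ[ℂ] (C r s k • (φ i r * φ j s)) : g ⊗[ℂ] F) := by
            refine Finset.sum_congr rfl fun r _ => Finset.sum_congr rfl fun s _ => ?_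
            rw [hC r s, TensorProduct.sum_tmul]
            exact Finset.sum_congr rfl fun k _ => TensorProduct.smul_tmul _ _ _
        _ = ∑ k, ∑ r, ∑ s, (b k ⊗ₜ[ℂ] (C r s k • (φ i r * φ j s)) : g ⊗[ℂ] F) := triple _
        _ = ∑ k, b k ⊗ₜ[ℂ] (∑ r, ∑ s, C r s k • (φ i r * φ j s)) := by
            simp only [TensorProduct.tmul_sum]
    have hP2 : (∑ r, ∑ s, (b s ⊗ₜ[ℂ] ((if r = i then (1:ℂ) else 0) • act (b r) (φ j s)) : g ⊗[ℂ] F))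
        = ∑ k, b k ⊗ₜ[ℂ] act (b i) (φ j k) := by
      rw [Finset.sum_comm]
      refine Finset.sum_congr rfl fun k _ => ?_
      rw [Finset.sum_congr rfl (fun r _ => by
        rw [show (b k ⊗ₜ[ℂ] ((if r = i then (1:ℂ) else 0) • act (b r) (φ j k)) : g ⊗[ℂ] F)
            = if r = i then b k ⊗ₜ[ℂ] act (b r) (φ j k) else 0 by
          by_cases h : r = i <;> simp [h]])]
      simp
    have hP3 : (∑ r, ∑ s, (b r ⊗ₜ[ℂ] ((if s = j then (1:ℂ) else 0) • act (b s) (φ i r)) : g ⊗[ℂ] F))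
        = ∑ k, b k ⊗ₜ[ℂ] act (b j) (φ i k) := by
      refine Finset.sum_congr rfl fun k _ => ?_
      rw [Finset.sum_congr rfl (fun s _ => by
        rw [show (b k ⊗ₜ[ℂ] ((if s = j then (1:ℂ) else 0) • act (b s) (φ i k)) : g ⊗[ℂ] F)
            = if s = j then b k ⊗ₜ[ℂ] act (b s) (φ i k) else 0 by
          by_cases h : s = j <;> simp [h]])]
      simp
    calc (∑ r, ∑ s, ((⁅b r, b s⁆ ⊗ₜ[ℂ] (φ i r * φ j s)
            + b s ⊗ₜ[ℂ] ((if r = i then (1:ℂ) else 0) • act (b r) (φ j s))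
            - b r ⊗ₜ[ℂ] ((if s = j then (1:ℂ) else 0) • act (b s) (φ i r))) : g ⊗[ℂ] F))
        = (∑ r, ∑ s, (⁅b r, b s⁆ ⊗ₜ[ℂ] (φ i r * φ j s) : g ⊗[ℂ] F))
          + (∑ r, ∑ s, (b s ⊗ₜ[ℂ] ((if r = i then (1:ℂ) else 0) • act (b r) (φ j s)) : g ⊗[ℂ] F))
          - (∑ r, ∑ s, (b r ⊗ₜ[ℂ] ((if s = j then (1:ℂ) else 0) • act (b s) (φ i r)) : g ⊗[ℂ] F)) := by
          simp [Finset.sum_add_distrib, Finset.sum_sub_distrib]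
      _ = ∑ k, b k ⊗ₜ[ℂ] ((∑ r, ∑ s, C r s k • (φ i r * φ j s))
            + act (b i) (φ j k) - act (b j) (φ i k)) := by
          rw [hP1, hP2, hP3, ← Finset.sum_add_distrib, ← Finset.sum_sub_distrib]
          exact Finset.sum_congr rfl fun k _ => by
            rw [← TensorProduct.tmul_add, ← TensorProduct.tmul_sub]
  -- componentwise characterisation of the Lie-morphism property on basis vectors
  have key : ∀ i j, (cov ⁅b i, b j⁆ = B (cov (b i)) (cov (b j))) ↔
      ∀ k, (∑ l, C i j l • φ l k) =
        (∑ r, ∑ s, C r s k • (φ i r * φ j s)) + act (b i) (φ j k) - act (b j) (φ i k) := by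
    intro i j
    rw [hLHS i j, hRHS i j]
    constructor
    · intro h k
      have := congrArg (e k) h
      rwa [he, he] at this
    · intro h
      exact Finset.sum_congr rfl fun k _ => by rw [h k]
  -- relating the two orderings of the quadratic sum
  have hswap : ∀ i j k, (∑ s, ∑ r, C s r k • (φ i r * φ j s))
      = - ∑ r, ∑ s, C r s k • (φ i r * φ j s) := by
    intro i j k
    rw [Finset.sum_comm, ← Finset.sum_neg_distrib]
    refine Finset.sum_congr rfl fun r _ => ?_
    rw [← Finset.sum_neg_distrib]
    refine Finset.sum_congr rfl fun s _ => ?_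
    rw [hanti s r k, neg_smul]
  constructor
  · -- structure identity → Lie morphism
    intro hSI X Y
    have hbasis : ∀ i j, cov ⁅b i, b j⁆ = B (cov (b i)) (cov (b j)) := by
      intro i j
      refine (key i j).2 fun k => ?_
      have h1 := hSI i j k
      rw [hswap i j k] at h1
      linear_combination -h1
    let L1 : g →ₗ[ℂ] g →ₗ[ℂ] g ⊗[ℂ] F :=
      LinearMap.compr₂ ((LieAlgebra.ad ℂ g : g →ₗ⁅ℂ⁆ Module.End ℂ g) :
        g →ₗ[ℂ] Module.End ℂ g) cov
    let L2 : g →ₗ[ℂ] g →ₗ[ℂ] g ⊗[ℂ] F := LinearMap.compl₂ (B.comp cov) cov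
    have hL : L1 = L2 := by
      refine b.ext fun i => b.ext fun j => ?_
      simpa [L1, L2, LinearMap.compr₂_apply, LinearMap.compl₂_apply,
        LieHom.coe_toLinearMap, LieAlgebra.ad_apply] using hbasis i j
    have := DFunLike.congr_fun (DFunLike.congr_fun hL X) Y
    simpa [L1, L2, LinearMap.compr₂_apply, LinearMap.compl₂_apply,
      LieHom.coe_toLinearMap, LieAlgebra.ad_apply] using this
  · -- Lie morphism → structure identity
    intro hLie i j k
    have h1 := (key i j).1 (hLie (b i) (b j)) k
    rw [hswap i j k]
    linear_combination -h1
end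
end

section
/- Let (g₁,g₂) be a matched pair of finite-dimensional complex Lie algebras and let M be a left module over the double crossed sum Lie algebra g := g₁⋈g₂ whose restriction to g₂ is locally finite. Then, with the g₁-action obtained by restriction and the R(g₂)-coaction ▽_M: M → M⊗R(g₂) dual to the U(g₂)-action (▽_M(m)=m⁽⁰⁾⊗m⁽¹⁾ if and only if v·m = m⁽¹⁾(v)m⁽⁰⁾ for all v∈U(g₂)), M is an induced (g₁,R(g₂))-module. Conversely, every induced (g₁,R(g₂))-module arises in this way. -/
/-!
STATEMENT 15: Let `(g₁, g₂)` be a matched pair of finite-dimensional complex Lie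
algebras and let `M` be a left module over the double crossed sum Lie algebra
`a := g₁ ⋈ g₂` whose restriction to `g₂` is locally finite.  Then, with the
`g₁`-action obtained by restriction and the `R(g₂)`-coaction `▽_M : M → M ⊗ R(g₂)`
dual to the `U(g₂)`-action (`▽_M(m) = m⁽⁰⁾ ⊗ m⁽¹⁾` iff `v · m = m⁽¹⁾(v) m⁽⁰⁾` for all
`v ∈ U(g₂)`), `M` is an induced `(g₁, R(g₂))`-module.  Conversely, every induced
`(g₁, R(g₂))`-module arises in this way.
-/

open scoped TensorProduct
open TensorProduct

noncomputable section

local notation "𝒰" g => UniversalEnvelopingAlgebra ℂ g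

namespace S15

/-- Contraction of the second tensor factor along a functional. -/
def contr {M F : Type} [AddCommGroup M] [Module ℂ M] [AddCommGroup F] [Module ℂ F]
    (ψ : F →ₗ[ℂ] ℂ) : M ⊗[ℂ] F →ₗ[ℂ] M :=
  (TensorProduct.rid ℂ M).toLinearMap ∘ₗ LinearMap.lTensor M ψ

variable {U F g₁ M : Type} [Ring U] [Algebra ℂ U]
  [CommRing F] [Algebra ℂ F] [AddCommGroup g₁] [Module ℂ g₁]
  [AddCommGroup M] [Module ℂ M] {N : Type} [AddCommGroup N] [Module ℂ N]
  {F₂ : Type} [AddCommGroup F₂] [Module ℂ F₂]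

@[simp] lemma contr_tmul {M' G : Type} [AddCommGroup M'] [Module ℂ M']
    [AddCommGroup G] [Module ℂ G] (ψ : G →ₗ[ℂ] ℂ) (m : M') (f : G) :
    contr ψ (m ⊗ₜ[ℂ] f) = ψ f • m := by simp [contr]

/-- Pairing of two functionals on a twofold tensor product. -/
def pair2 (ψ χ : F →ₗ[ℂ] ℂ) : F ⊗[ℂ] F →ₗ[ℂ] ℂ :=
  LinearMap.mul' ℂ ℂ ∘ₗ TensorProduct.map ψ χ

@[simp] lemma pair2_tmul (ψ χ : F →ₗ[ℂ] ℂ) (f h : F) :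
    pair2 ψ χ (f ⊗ₜ[ℂ] h) = ψ f * χ h := by simp [pair2]

lemma pair2_eq (ψ χ : F →ₗ[ℂ] ℂ) (t : F ⊗[ℂ] F) :
    pair2 ψ χ t = ψ (contr χ t) := by
  induction t with
  | zero => simp
  | tmul f h => simp [mul_comm]
  | add x y hx hy => simp [hx, hy]

lemma contr_lTensor (A : F →ₗ[ℂ] F₂) (ψ : F₂ →ₗ[ℂ] ℂ) (t : M ⊗[ℂ] F) :
    contr ψ (LinearMap.lTensor M A t) = contr (ψ ∘ₗ A) t := by
  induction t with
  | zero => simp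
  | tmul m f => simp
  | add x y hx hy => simp [hx, hy]

lemma contr_pair2_assoc (ψ χ : F →ₗ[ℂ] ℂ) (cov : M →ₗ[ℂ] M ⊗[ℂ] F) (t : M ⊗[ℂ] F) :
    contr (pair2 ψ χ) ((TensorProduct.assoc ℂ M F F) ((LinearMap.rTensor F cov) t)) =
      contr ψ (cov (contr χ t)) := by
  have inner : ∀ (u : M ⊗[ℂ] F) (f : F),
      contr (pair2 ψ χ) ((TensorProduct.assoc ℂ M F F) (u ⊗ₜ[ℂ] f)) = χ f • contr ψ u := by
    intro u f
    induction u with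
    | zero => simp
    | tmul m h => simp [TensorProduct.assoc_tmul, mul_comm, smul_smul]
    | add x y hx hy => simp [TensorProduct.add_tmul, hx, hy, smul_add]
  induction t with
  | zero => simp
  | tmul m f => rw [LinearMap.rTensor_tmul, inner]; simp
  | add x y hx hy => simp [hx, hy, smul_add]

lemma pair2_emb (emb : F →ₗ[ℂ] U →ₗ[ℂ] ℂ) (v w : U) (g : F ⊗[ℂ] F) :
    pair2 (emb.flip v) (emb.flip w) g =
      TensorProduct.dualDistrib ℂ U U (TensorProduct.map emb emb g) (v ⊗ₜ[ℂ] w) := by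
  induction g with
  | zero => simp
  | tmul f h => simp [TensorProduct.dualDistrib_apply]
  | add x y hx hy => simp [hx, hy]

lemma pair2_comul (emb : F →ₗ[ℂ] U →ₗ[ℂ] ℂ) (Δ : F →ₗ[ℂ] F ⊗[ℂ] F)
    (h : ∀ f, TensorProduct.dualDistrib ℂ U U ((TensorProduct.map emb emb) (Δ f)) =
      emb f ∘ₗ LinearMap.mul' ℂ U) (v w : U) :
    pair2 (emb.flip v) (emb.flip w) ∘ₗ Δ = emb.flip (v * w) := by
  ext f
  rw [LinearMap.comp_apply, pair2_emb emb v w, h f]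
  simp

lemma sep1_aux (emb : F →ₗ[ℂ] U →ₗ[ℂ] ℂ) (hinj : Function.Injective emb)
    {f : F} (hf : ∀ v : U, emb f v = 0) : f = 0 := by
  apply hinj; rw [map_zero]; ext v; exact hf v

/-- Separation lemma: a tensor killed by a separating family of functionals on the
second factor vanishes. -/
lemma sep {W : Type} [AddCommGroup W] [Module ℂ W] {T : Set (W →ₗ[ℂ] ℂ)}
    (hT : ∀ w : W, (∀ ψ ∈ T, ψ w = 0) → w = 0) {t : M ⊗[ℂ] W}
    (ht : ∀ ψ ∈ T, contr ψ t = 0) : t = 0 := by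
  classical
  let c := Module.Basis.ofVectorSpace ℂ M
  let e₁ := TensorProduct.congr c.repr (LinearEquiv.refl ℂ W)
  let fs := TensorProduct.finsuppScalarLeft ℂ W (Module.Basis.ofVectorSpaceIndex ℂ M)
  have key : ∀ (ψ : W →ₗ[ℂ] ℂ) (t : M ⊗[ℂ] W) (i : Module.Basis.ofVectorSpaceIndex ℂ M),
      ψ ((fs (e₁ t)) i) = c.repr (contr ψ t) i := by
    intro ψ t
    induction t with
    | zero => simp
    | tmul m w =>
        intro i
        simp only [e₁, fs, TensorProduct.congr_tmul, LinearEquiv.refl_apply,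
          TensorProduct.finsuppScalarLeft_apply_tmul_apply, contr_tmul, map_smul]
        simp [Finsupp.smul_apply, smul_eq_mul, mul_comm]
    | add x y hx hy =>
        intro i
        simp only [map_add, Finsupp.add_apply] at *
        rw [hx, hy]
  have hz : fs (e₁ t) = 0 := by
    ext i
    refine hT _ fun ψ hψ => ?_
    rw [key ψ t i, ht ψ hψ]
    simp
  have : e₁ t = 0 := by
    apply fs.injective
    simpa using hz
  simpa using e₁.injective (by simpa using this)

lemma sep1 (emb : F →ₗ[ℂ] U →ₗ[ℂ] ℂ) (hinj : Function.Injective emb)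
    {t : M ⊗[ℂ] F} (ht : ∀ v : U, contr (emb.flip v) t = 0) : t = 0 := by
  apply sep (T := Set.range emb.flip)
  · intro f hf
    exact sep1_aux emb hinj fun v => hf _ ⟨v, rfl⟩
  · rintro ψ ⟨v, rfl⟩
    exact ht v

lemma sep1_eq (emb : F →ₗ[ℂ] U →ₗ[ℂ] ℂ) (hinj : Function.Injective emb)
    {t₁ t₂ : M ⊗[ℂ] F}
    (h : ∀ v : U, contr (emb.flip v) t₁ = contr (emb.flip v) t₂) : t₁ = t₂ := by
  have := sep1 emb hinj (t := t₁ - t₂) fun v => by rw [map_sub, h, sub_self]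
  exact sub_eq_zero.mp this

lemma sep2 (emb : F →ₗ[ℂ] U →ₗ[ℂ] ℂ) (hinj : Function.Injective emb)
    {t : M ⊗[ℂ] (F ⊗[ℂ] F)}
    (ht : ∀ v w : U, contr (pair2 (emb.flip v) (emb.flip w)) t = 0) : t = 0 := by
  apply sep (T := {ψ | ∃ v w : U, ψ = pair2 (emb.flip v) (emb.flip w)})
  · intro g hg
    apply sep1 emb hinj (t := g)
    intro w
    apply sep1_aux emb hinj
    intro v
    have := hg _ ⟨v, w, rfl⟩
    rw [pair2_eq] at this
    simpa using this
  · rintro ψ ⟨v, w, rfl⟩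
    exact ht v w

lemma sep2_eq (emb : F →ₗ[ℂ] U →ₗ[ℂ] ℂ) (hinj : Function.Injective emb)
    {t₁ t₂ : M ⊗[ℂ] (F ⊗[ℂ] F)}
    (h : ∀ v w : U,
      contr (pair2 (emb.flip v) (emb.flip w)) t₁ =
        contr (pair2 (emb.flip v) (emb.flip w)) t₂) : t₁ = t₂ := by
  have := sep2 emb hinj (t := t₁ - t₂) fun v w => by rw [map_sub, h, sub_self]
  exact sub_eq_zero.mp this

/-- The contraction, linear in the `U`-slot. -/
def contrE (emb : F →ₗ[ℂ] U →ₗ[ℂ] ℂ) : U →ₗ[ℂ] (M ⊗[ℂ] F) →ₗ[ℂ] M where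
  toFun v := contr (emb.flip v)
  map_add' v w := by
    apply TensorProduct.ext'; intro m f; simp [add_smul]
  map_smul' r v := by
    apply TensorProduct.ext'; intro m f; simp [smul_smul]

@[simp] lemma contrE_apply (emb : F →ₗ[ℂ] U →ₗ[ℂ] ℂ) (v : U) :
    (contrE emb : U →ₗ[ℂ] (M ⊗[ℂ] F) →ₗ[ℂ] M) v = contr (emb.flip v) := rfl

/-- The bilinear family `v₁ ⊗ v₂ ↦ X ↦ BL (ρg v₁ X) ∘ₗ act2 v₂`. -/
def K (BL : g₁ →ₗ[ℂ] M →ₗ[ℂ] M) (ρg : U →ₗ[ℂ] Module.End ℂ g₁)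
    (act2 : U →ₗ[ℂ] N →ₗ[ℂ] M) : U ⊗[ℂ] U →ₗ[ℂ] g₁ →ₗ[ℂ] N →ₗ[ℂ] M :=
  TensorProduct.lift <| LinearMap.mk₂ ℂ
    (fun v₁ v₂ => ((LinearMap.llcomp ℂ N M M).flip (act2 v₂)) ∘ₗ (BL ∘ₗ (ρg v₁)))
    (by intro v₁ v₁' v₂; ext X m; simp)
    (by intro r v₁ v₂; ext X m; simp)
    (by intro v₁ v₂ v₂'; ext X m; simp)
    (by intro v₁ r v₂; ext X m; simp)

@[simp] lemma K_tmul (BL : g₁ →ₗ[ℂ] M →ₗ[ℂ] M) (ρg : U →ₗ[ℂ] Module.End ℂ g₁)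
    (act2 : U →ₗ[ℂ] N →ₗ[ℂ] M) (v₁ v₂ : U) (X : g₁) (m : N) :
    K BL ρg act2 (v₁ ⊗ₜ[ℂ] v₂) X m = BL (ρg v₁ X) (act2 v₂ m) := rfl

attribute [irreducible] K

lemma K_cov (BL : g₁ →ₗ[ℂ] M →ₗ[ℂ] M) (ρg : U →ₗ[ℂ] Module.End ℂ g₁)
    (emb : F →ₗ[ℂ] U →ₗ[ℂ] ℂ) (ρUl : U →ₗ[ℂ] Module.End ℂ M) (cov : M →ₗ[ℂ] M ⊗[ℂ] F)
    (hcov : ∀ v x, ρUl v x = contr (emb.flip v) (cov x)) (t : U ⊗[ℂ] U) (X : g₁) (x : M) :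
    K BL ρg (contrE emb) t X (cov x) = K BL ρg ρUl t X x := by
  induction t with
  | zero => simp
  | tmul v₁ v₂ => rw [K_tmul, K_tmul, contrE_apply, ← hcov]
  | add s r hs hr => simp only [map_add, LinearMap.add_apply, hs, hr]

/-- Pairing the first leg of the induced-module formula with `v`. -/
lemma big {n : ℕ} (b : Module.Basis (Fin n) ℂ g₁)
    (emb : F →ₗ[ℂ] U →ₗ[ℂ] ℂ) (Δ : U →ₗ[ℂ] U ⊗[ℂ] U)
    (hemb_mul : ∀ f h : F, emb (f * h) =
      LinearMap.mul' ℂ ℂ ∘ₗ (TensorProduct.map (emb f) (emb h)) ∘ₗ Δ)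
    (ρg : U →ₗ[ℂ] Module.End ℂ g₁) (BL : g₁ →ₗ[ℂ] M →ₗ[ℂ] M)
    (covF : g₁ →ₗ[ℂ] g₁ ⊗[ℂ] F) (φF : Fin n → Fin n → F)
    (hφF : ∀ i, covF (b i) = ∑ j, b j ⊗ₜ[ℂ] φF i j)
    (hφF_pair : ∀ i j v, emb (φF i j) v = b.coord j (ρg v (b i)))
    (v : U) (X : g₁) (s : M ⊗[ℂ] F) :
    contr (emb.flip v)
        ((TensorProduct.map (TensorProduct.lift BL) (LinearMap.mul' ℂ F))
          ((TensorProduct.tensorTensorTensorComm ℂ g₁ F M F) ((covF X) ⊗ₜ[ℂ] s))) =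
      K BL ρg (contrE emb) (Δ v) X s := by
  have main : ∀ (i : Fin n) (s : M ⊗[ℂ] F),
      contr (emb.flip v)
        ((TensorProduct.map (TensorProduct.lift BL) (LinearMap.mul' ℂ F))
          ((TensorProduct.tensorTensorTensorComm ℂ g₁ F M F) ((covF (b i)) ⊗ₜ[ℂ] s))) =
      K BL ρg (contrE emb) (Δ v) (b i) s := by
    intro i s
    induction s with
    | zero => simp
    | tmul m f =>
        rw [hφF, TensorProduct.sum_tmul, map_sum, map_sum, map_sum]
        have key : ∀ t : U ⊗[ℂ] U,
            (∑ j, (LinearMap.mul' ℂ ℂ (TensorProduct.map (emb (φF i j)) (emb f) t)) •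
              (BL (b j)) m) = K BL ρg (contrE emb) t (b i) (m ⊗ₜ[ℂ] f) := by
          intro t
          induction t with
          | zero => simp
          | tmul v₁ v₂ =>
              simp only [TensorProduct.map_tmul, LinearMap.mul'_apply, K_tmul, contrE_apply,
                contr_tmul, map_smul]
              have : ρg v₁ (b i) = ∑ j, emb (φF i j) v₁ • b j := by
                conv_lhs => rw [← b.sum_repr (ρg v₁ (b i))]
                refine Finset.sum_congr rfl fun j _ => ?_
                rw [hφF_pair i j v₁]
                rfl
              rw [this]
              rw [map_sum, LinearMap.sum_apply, Finset.smul_sum]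
              refine Finset.sum_congr rfl fun j _ => ?_
              simp [smul_smul, mul_comm]
          | add x y hx hy =>
              simp only [map_add, add_smul, Finset.sum_add_distrib, hx, hy, LinearMap.add_apply]
        rw [← key (Δ v)]
        refine Finset.sum_congr rfl fun j _ => ?_
        rw [TensorProduct.tensorTensorTensorComm_tmul, TensorProduct.map_tmul, contr_tmul,
          TensorProduct.lift.tmul, LinearMap.mul'_apply, LinearMap.flip_apply, hemb_mul]
        rfl
    | add x y hx hy =>
        simp only [TensorProduct.tmul_add, map_add, hx, hy]
  have hX : covF X = ∑ i, b.repr X i • covF (b i) := by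
    conv_lhs => rw [← b.sum_repr X]
    rw [map_sum]
    simp
  rw [hX, TensorProduct.sum_tmul, map_sum, map_sum, map_sum]
  have hX2 : K BL ρg (contrE emb) (Δ v) X s
      = ∑ i, b.repr X i • K BL ρg (contrE emb) (Δ v) (b i) s := by
    conv_lhs => rw [← b.sum_repr X]
    rw [map_sum, LinearMap.sum_apply]
    simp
  rw [hX2]
  refine Finset.sum_congr rfl fun i _ => ?_
  rw [← TensorProduct.smul_tmul', map_smul, map_smul, map_smul, main i s]

lemma uea_induction {L : Type} [LieRing L] [LieAlgebra ℂ L]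
    {P : UniversalEnvelopingAlgebra ℂ L → Prop}
    (halg : ∀ r : ℂ, P (algebraMap ℂ _ r))
    (hgen : ∀ x : L, P (UniversalEnvelopingAlgebra.ι ℂ x))
    (hmul : ∀ u v, P u → P v → P (u * v))
    (hadd : ∀ u v, P u → P v → P (u + v)) :
    ∀ u, P u := by
  intro u
  obtain ⟨t, rfl⟩ : ∃ t, UniversalEnvelopingAlgebra.mkAlgHom ℂ L t = u := by
    obtain ⟨t, ht⟩ := Quotient.mk''_surjective u; exact ⟨t, ht⟩
  induction t using TensorAlgebra.induction with
  | algebraMap r => rw [AlgHom.commutes]; exact halg r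
  | ι x => exact hgen x
  | mul a b ha hb => rw [map_mul]; exact hmul _ _ ha hb
  | add a b ha hb => rw [map_add]; exact hadd _ _ ha hb

section Master

variable {g₂ : Type} [LieRing g₂] [LieAlgebra ℂ g₂]

local notation "UU" => UniversalEnvelopingAlgebra ℂ g₂
local notation "ι₂" => UniversalEnvelopingAlgebra.ι ℂ (L := g₂)

lemma master
    (comul₂ : (UU) →ₐ[ℂ] (UU) ⊗[ℂ] (UU))
    (hcomul₂ : ∀ ζ : g₂, comul₂ (ι₂ ζ) = (ι₂ ζ) ⊗ₜ[ℂ] 1 + 1 ⊗ₜ[ℂ] (ι₂ ζ))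
    (ρ : (UU) →ₐ[ℂ] Module.End ℂ g₁)
    (Dact : (UU) →ₗ[ℂ] g₁ →ₗ[ℂ] (UU))
    (hDact_one : ∀ X : g₁, Dact 1 X = 0)
    (hDact_mul : ∀ X : g₁,
      (Dact.flip X) ∘ₗ LinearMap.mul' ℂ (UU) =
        LinearMap.mul' ℂ (UU) ∘ₗ
          (LinearMap.rTensor (UU)
            (TensorProduct.lift Dact ∘ₗ
              LinearMap.lTensor (UU) (ρ.toLinearMap.flip X))) ∘ₗ
          (TensorProduct.assoc ℂ (UU) (UU) (UU)).symm.toLinearMap ∘ₗ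
          LinearMap.lTensor (UU) comul₂.toLinearMap
        + LinearMap.mul' ℂ (UU) ∘ₗ LinearMap.lTensor (UU) (Dact.flip X))
    (BL : g₁ →ₗ[ℂ] M →ₗ[ℂ] M)
    (ρU : (UU) →ₐ[ℂ] Module.End ℂ M)
    (hgenMI : ∀ (ζ : g₂) (X : g₁), ρU (ι₂ ζ) ∘ₗ BL X =
      BL (ρ (ι₂ ζ) X) + BL X ∘ₗ ρU (ι₂ ζ) + ρU (Dact (ι₂ ζ) X)) :
    ∀ (v : UU) (X : g₁), ρU v ∘ₗ BL X =
      K BL ρ.toLinearMap ρU.toLinearMap (comul₂ v) X + ρU (Dact v X) := by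
  set KM := K BL ρ.toLinearMap ρU.toLinearMap with hKM
  refine uea_induction ?_ ?_ ?_ ?_
  · intro r X
    rw [AlgHom.commutes, AlgHom.commutes]
    have h1 : Dact (algebraMap ℂ (UU) r) X = 0 := by
      rw [Algebra.algebraMap_eq_smul_one, map_smul, LinearMap.smul_apply, hDact_one, smul_zero]
    rw [h1, map_zero, add_zero]
    have h2 : algebraMap ℂ ((UU) ⊗[ℂ] (UU)) r = r • ((1 : UU) ⊗ₜ[ℂ] (1 : UU)) := by
      rw [Algebra.algebraMap_eq_smul_one]; rfl
    rw [h2, map_smul]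
    ext m
    rw [hKM]
    simp [Module.algebraMap_end_apply]
  · intro ζ X
    rw [hcomul₂, map_add]
    have e1 : KM ((ι₂ ζ) ⊗ₜ[ℂ] (1 : UU)) X = BL (ρ (ι₂ ζ) X) := by
      ext m; rw [hKM]; simp
    have e2 : KM ((1 : UU) ⊗ₜ[ℂ] (ι₂ ζ)) X = BL X ∘ₗ ρU (ι₂ ζ) := by
      ext m; rw [hKM]; simp
    rw [LinearMap.add_apply, e1, e2, hgenMI]
  · intro u v hu hv X
    set DD : (UU) ⊗[ℂ] (UU) →ₗ[ℂ] (UU) :=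
      LinearMap.mul' ℂ (UU) ∘ₗ
        (LinearMap.rTensor (UU)
          (TensorProduct.lift Dact ∘ₗ LinearMap.lTensor (UU) (ρ.toLinearMap.flip X))) ∘ₗ
        (TensorProduct.assoc ℂ (UU) (UU) (UU)).symm.toLinearMap ∘ₗ
        (TensorProduct.mk ℂ (UU) ((UU) ⊗[ℂ] (UU)) u) with hDD
    have DD_tmul : ∀ w₁ w₂ : UU, DD (w₁ ⊗ₜ[ℂ] w₂) = Dact u (ρ w₁ X) * w₂ := by
      intro w₁ w₂
      simp [hDD, TensorProduct.assoc_symm_tmul]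
    have C2 : ∀ (w₁ w₂ : UU) (s : (UU) ⊗[ℂ] (UU)),
        KM s (ρ w₁ X) ∘ₗ ρU w₂ = KM (s * (w₁ ⊗ₜ[ℂ] w₂)) X := by
      intro w₁ w₂ s
      induction s with
      | zero => simp
      | tmul v₁ v₂ =>
          rw [Algebra.TensorProduct.tmul_mul_tmul]
          ext m
          rw [hKM]
          simp [map_mul ρ, map_mul ρU, Module.End.mul_apply]
      | add x y hx hy =>
          simp only [add_mul, map_add, LinearMap.add_apply, LinearMap.add_comp, hx, hy]
    have C1 : ∀ (t : (UU) ⊗[ℂ] (UU)),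
        ρU u ∘ₗ KM t X = KM (comul₂ u * t) X + ρU (DD t) := by
      intro t
      induction t with
      | zero => simp
      | tmul w₁ w₂ =>
          have step : KM (w₁ ⊗ₜ[ℂ] w₂) X = BL (ρ w₁ X) ∘ₗ ρU w₂ := by
            ext m; simp [KM]
          rw [step, ← LinearMap.comp_assoc, hu (ρ w₁ X), LinearMap.add_comp, C2 w₁ w₂,
            DD_tmul, map_mul ρU]
          rfl
      | add x y hx hy =>
          simp only [map_add, LinearMap.add_apply, LinearMap.comp_add, mul_add, hx, hy]
          abel
    have h1 : ρU (u * v) ∘ₗ BL X = ρU u ∘ₗ (ρU v ∘ₗ BL X) := by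
      rw [map_mul]; rfl
    have h2 : ρU u ∘ₗ ρU (Dact v X) = ρU (u * Dact v X) := by rw [map_mul ρU]; rfl
    have h3 : DD (comul₂ v) + u * Dact v X = Dact (u * v) X := by
      have hh := LinearMap.congr_fun (hDact_mul X) (u ⊗ₜ[ℂ] v)
      simp only [LinearMap.comp_apply, LinearMap.mul'_apply, LinearMap.add_apply,
        LinearMap.lTensor_tmul, LinearMap.flip_apply] at hh
      rw [hh]
      rfl
    rw [h1, hv X, LinearMap.comp_add, C1 (comul₂ v), h2, map_mul comul₂ u v, ← h3, map_add]
    abel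
  · intro u v hu hv X
    simp only [map_add, LinearMap.add_apply, LinearMap.add_comp, hu X, hv X]
    abel

end Master
end S15

attribute [local instance 100] LieRing.ofAssociativeRing

theorem induced_modules_from_doubleCrossedSum_modules
    {g₁ : Type} [LieRing g₁] [LieAlgebra ℂ g₁] [FiniteDimensional ℂ g₁]
    {g₂ : Type} [LieRing g₂] [LieAlgebra ℂ g₂] [FiniteDimensional ℂ g₂]
    -- the mutual actions of the matched pair `(g₁, g₂)`:
    (uact : g₂ →ₗ[ℂ] g₁ →ₗ[ℂ] g₁) (dact : g₂ →ₗ[ℂ] g₁ →ₗ[ℂ] g₂)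
    (hmp1 : ∀ (ζ ξ : g₂) (X : g₁),
      uact ⁅ζ, ξ⁆ X = uact ζ (uact ξ X) - uact ξ (uact ζ X))
    (hmp2 : ∀ (ζ : g₂) (X Y : g₁),
      dact ζ ⁅X, Y⁆ = dact (dact ζ X) Y - dact (dact ζ Y) X)
    (hmp3 : ∀ (ζ : g₂) (X Y : g₁),
      uact ζ ⁅X, Y⁆ =
        ⁅uact ζ X, Y⁆ + ⁅X, uact ζ Y⁆ + uact (dact ζ X) Y - uact (dact ζ Y) X)
    (hmp4 : ∀ (ζ ξ : g₂) (X : g₁),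
      dact ⁅ζ, ξ⁆ X =
        ⁅dact ζ X, ξ⁆ + ⁅ζ, dact ξ X⁆ + dact ζ (uact ξ X) - dact ξ (uact ζ X))
    -- the double crossed sum Lie algebra `a = g₁ ⋈ g₂`:
    {a : Type} [LieRing a] [LieAlgebra ℂ a]
    (ea : a ≃ₗ[ℂ] g₁ × g₂)
    (hbracket : ∀ x y : a,
      ea ⁅x, y⁆ =
        (⁅(ea x).1, (ea y).1⁆ + uact (ea x).2 (ea y).1 - uact (ea y).2 (ea x).1,
         ⁅(ea x).2, (ea y).2⁆ + dact (ea x).2 (ea y).1 - dact (ea y).2 (ea x).1))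
    -- the coalgebra structure of `U(g₂)` (generators primitive):
    (comul₂ : (𝒰 g₂) →ₐ[ℂ] (𝒰 g₂) ⊗[ℂ] (𝒰 g₂)) (counit₂ : (𝒰 g₂) →ₐ[ℂ] ℂ)
    (hcomul₂ : ∀ ζ : g₂, comul₂ (UniversalEnvelopingAlgebra.ι ℂ ζ) =
      UniversalEnvelopingAlgebra.ι ℂ ζ ⊗ₜ[ℂ] 1 + 1 ⊗ₜ[ℂ] UniversalEnvelopingAlgebra.ι ℂ ζ)
    (hcounit₂ : ∀ ζ : g₂, counit₂ (UniversalEnvelopingAlgebra.ι ℂ ζ) = 0)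
    -- the induced left action of `U(g₂)` on `g₁` and right action of `g₁` on `U(g₂)`:
    (ρ : (𝒰 g₂) →ₐ[ℂ] Module.End ℂ g₁)
    (hρ : ∀ (ζ : g₂) (X : g₁), ρ (UniversalEnvelopingAlgebra.ι ℂ ζ) X = uact ζ X)
    (Dact : (𝒰 g₂) →ₗ[ℂ] g₁ →ₗ[ℂ] (𝒰 g₂))
    (hDact_gen : ∀ (ζ : g₂) (X : g₁),
      Dact (UniversalEnvelopingAlgebra.ι ℂ ζ) X =
        UniversalEnvelopingAlgebra.ι ℂ (dact ζ X))
    (hDact_one : ∀ X : g₁, Dact 1 X = 0)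
    (hDact_mul : ∀ X : g₁,
      (Dact.flip X) ∘ₗ LinearMap.mul' ℂ (𝒰 g₂) =
        LinearMap.mul' ℂ (𝒰 g₂) ∘ₗ
          (LinearMap.rTensor (𝒰 g₂)
            (TensorProduct.lift Dact ∘ₗ
              LinearMap.lTensor (𝒰 g₂) (ρ.toLinearMap.flip X))) ∘ₗ
          (TensorProduct.assoc ℂ (𝒰 g₂) (𝒰 g₂) (𝒰 g₂)).symm.toLinearMap ∘ₗ
          LinearMap.lTensor (𝒰 g₂) comul₂.toLinearMap
        + LinearMap.mul' ℂ (𝒰 g₂) ∘ₗ LinearMap.lTensor (𝒰 g₂) (Dact.flip X))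
    -- `F` is the Hopf algebra `R(g₂)` of representative functions on `U(g₂)`:
    {F : Type} [CommRing F] [HopfAlgebra ℂ F]
    (emb : F →ₗ[ℂ] Module.Dual ℂ (𝒰 g₂))
    (hemb_inj : Function.Injective emb)
    (hrange : ∀ φ : Module.Dual ℂ (𝒰 g₂), (∃ f : F, emb f = φ) ↔
      ∃ I : TwoSidedIdeal (𝒰 g₂),
        FiniteDimensional ℂ ((𝒰 g₂) ⧸ (Submodule.restrictScalars ℂ I.asIdeal)) ∧
        ∀ v ∈ I, φ v = 0)
    (hemb_mul : ∀ f h : F, emb (f * h) =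
      LinearMap.mul' ℂ ℂ ∘ₗ (TensorProduct.map (emb f) (emb h)) ∘ₗ comul₂.toLinearMap)
    (hemb_one : emb 1 = counit₂.toLinearMap)
    (hemb_comul : ∀ f : F,
      (TensorProduct.dualDistrib ℂ (𝒰 g₂) (𝒰 g₂))
          ((TensorProduct.map emb emb) (Coalgebra.comul (R := ℂ) (A := F) f)) =
        (emb f) ∘ₗ LinearMap.mul' ℂ (𝒰 g₂))
    (hemb_counit : ∀ f : F, Coalgebra.counit (R := ℂ) (A := F) f = emb f 1)
    -- the `g₁`-Hopf algebra structure of `R(g₂)`: the action `⟨X ▷ f, v⟩ = ⟨f, v ◁ X⟩`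
    -- and the coaction `▽_Alg` with coefficients `f_i^j (v) = ⟨v ▷ X_i, θ^j⟩`:
    (actF : g₁ →ₗ⁅ℂ⁆ Module.End ℂ F)
    (hactF : ∀ (X : g₁) (f : F) (v : 𝒰 g₂), emb (actF X f) v = emb f (Dact v X))
    (covF : g₁ →ₗ[ℂ] g₁ ⊗[ℂ] F)
    {n : ℕ} (b : Module.Basis (Fin n) ℂ g₁)
    (φF : Fin n → Fin n → F)
    (hφF : ∀ i, covF (b i) = ∑ j, b j ⊗ₜ[ℂ] φF i j)
    (hφF_pair : ∀ i j v, emb (φF i j) v = b.coord j (ρ v (b i))) :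
    -- Conclusion (forward direction): for every left `a = g₁ ⋈ g₂`-module `M` whose
    -- restriction to `g₂` is locally finite, the restricted `g₁`-action together with
    -- the coaction dual to the `U(g₂)`-action makes `M` an induced `(g₁,R(g₂))`-module:
    (∀ (M : Type) (_ : AddCommGroup M) (_ : Module ℂ M)
      (ρa : a →ₗ⁅ℂ⁆ Module.End ℂ M)
      -- local finiteness of the `g₂`-action:
      (_ : ∀ x : M, ∃ W : Submodule ℂ M, x ∈ W ∧ FiniteDimensional ℂ W ∧
        ∀ ζ : g₂, ∀ w ∈ W, ρa (ea.symm (0, ζ)) w ∈ W)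
      -- the extension of the `g₂`-action to `U(g₂)`:
      (ρU : (𝒰 g₂) →ₐ[ℂ] Module.End ℂ M)
      (_ : ∀ ζ : g₂, ρU (UniversalEnvelopingAlgebra.ι ℂ ζ) = ρa (ea.symm (0, ζ)))
      -- the dual coaction `▽_M` (`v · m = m⁽¹⁾(v) m⁽⁰⁾`):
      (covM : M →ₗ[ℂ] M ⊗[ℂ] F)
      (_ : ∀ (v : 𝒰 g₂) (x : M),
        ρU v x = (TensorProduct.rid ℂ M) ((LinearMap.lTensor M (emb.flip v)) (covM x))),
      -- `▽_M` is a coaction and `M` is an induced `(g₁, R(g₂))`-module: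
      ((TensorProduct.rid ℂ M).toLinearMap ∘ₗ
          (LinearMap.lTensor M (Coalgebra.counit (R := ℂ) (A := F))) ∘ₗ covM =
        LinearMap.id) ∧
      ((TensorProduct.assoc ℂ M F F).toLinearMap ∘ₗ
          (LinearMap.rTensor F covM) ∘ₗ covM =
        (LinearMap.lTensor M (Coalgebra.comul (R := ℂ) (A := F))) ∘ₗ covM) ∧
      (∀ (X : g₁) (x : M),
        covM (ρa (ea.symm (X, 0)) x) =
          (TensorProduct.map
              (TensorProduct.lift
                (ρa.toLinearMap ∘ₗ ea.symm.toLinearMap ∘ₗ LinearMap.inl ℂ g₁ g₂))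
              (LinearMap.mul' ℂ F))
            ((TensorProduct.tensorTensorTensorComm ℂ g₁ F M F)
              ((covF X) ⊗ₜ[ℂ] (covM x)))
          + (LinearMap.lTensor M (actF X)) (covM x)))
    ∧
    -- Conclusion (converse direction): every induced `(g₁, R(g₂))`-module comes this
    -- way:
    (∀ (N : Type) (_ : AddCommGroup N) (_ : Module ℂ N)
      (ρN : g₁ →ₗ⁅ℂ⁆ Module.End ℂ N)
      (covN : N →ₗ[ℂ] N ⊗[ℂ] F)
      (_ : (TensorProduct.rid ℂ N).toLinearMap ∘ₗ
          (LinearMap.lTensor N (Coalgebra.counit (R := ℂ) (A := F))) ∘ₗ covN =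
        LinearMap.id)
      (_ : (TensorProduct.assoc ℂ N F F).toLinearMap ∘ₗ
          (LinearMap.rTensor F covN) ∘ₗ covN =
        (LinearMap.lTensor N (Coalgebra.comul (R := ℂ) (A := F))) ∘ₗ covN)
      (_ : ∀ (X : g₁) (x : N),
        covN (ρN X x) =
          (TensorProduct.map (TensorProduct.lift ρN.toLinearMap) (LinearMap.mul' ℂ F))
            ((TensorProduct.tensorTensorTensorComm ℂ g₁ F N F)
              ((covF X) ⊗ₜ[ℂ] (covN x)))
          + (LinearMap.lTensor N (actF X)) (covN x)),
      ∃ (ρa : a →ₗ⁅ℂ⁆ Module.End ℂ N) (ρU : (𝒰 g₂) →ₐ[ℂ] Module.End ℂ N),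
        (∀ (X : g₁) (x : N), ρa (ea.symm (X, 0)) x = ρN X x) ∧
        (∀ ζ : g₂, ρU (UniversalEnvelopingAlgebra.ι ℂ ζ) = ρa (ea.symm (0, ζ))) ∧
        (∀ x : N, ∃ W : Submodule ℂ N, x ∈ W ∧ FiniteDimensional ℂ W ∧
          ∀ ζ : g₂, ∀ w ∈ W, ρa (ea.symm (0, ζ)) w ∈ W) ∧
        (∀ (v : 𝒰 g₂) (x : N),
          ρU v x = (TensorProduct.rid ℂ N) ((LinearMap.lTensor N (emb.flip v)) (covN x)))) := by
  constructor
  · -- forward direction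
    intro M instAG instMod ρa _hlf ρU hρUgen covM hcov
    set BL : g₁ →ₗ[ℂ] M →ₗ[ℂ] M :=
      ρa.toLinearMap ∘ₗ ea.symm.toLinearMap ∘ₗ LinearMap.inl ℂ g₁ g₂ with hBLdef
    have hBL : ∀ X : g₁, BL X = ρa (ea.symm (X, 0)) := by
      intro X; simp [hBLdef]
    have hcov' : ∀ (v : 𝒰 g₂) (x : M), ρU v x = S15.contr (emb.flip v) (covM x) :=
      fun v x => hcov v x
    have hgenMI : ∀ (ζ : g₂) (X : g₁),
        ρU (UniversalEnvelopingAlgebra.ι ℂ ζ) ∘ₗ BL X =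
          BL (ρ (UniversalEnvelopingAlgebra.ι ℂ ζ) X)
            + BL X ∘ₗ ρU (UniversalEnvelopingAlgebra.ι ℂ ζ)
            + ρU (Dact (UniversalEnvelopingAlgebra.ι ℂ ζ) X) := by
      intro ζ X
      show ρU (UniversalEnvelopingAlgebra.ι ℂ ζ) * BL X =
        BL (ρ (UniversalEnvelopingAlgebra.ι ℂ ζ) X)
          + BL X * ρU (UniversalEnvelopingAlgebra.ι ℂ ζ)
          + ρU (Dact (UniversalEnvelopingAlgebra.ι ℂ ζ) X)
      rw [hρUgen ζ, hDact_gen ζ X, hρ ζ X, hρUgen (dact ζ X), hBL X, hBL (uact ζ X)]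
      have hb : (⁅ea.symm (0, ζ), ea.symm (X, 0)⁆ : a)
          = ea.symm (uact ζ X, 0) + ea.symm (0, dact ζ X) := by
        apply ea.injective
        rw [hbracket, map_add]
        simp
      have hlie := ρa.map_lie (x := ea.symm (0, ζ)) (y := ea.symm (X, 0))
      rw [hb, map_add, Ring.lie_def, eq_sub_iff_add_eq] at hlie
      rw [← hlie]
      abel
    have MI := S15.master comul₂ hcomul₂ ρ Dact hDact_one hDact_mul BL ρU hgenMI
    refine ⟨?_, ?_, ?_⟩
    · apply LinearMap.ext; intro x
      have h1 : (Coalgebra.counit (R := ℂ) (A := F)) = emb.flip 1 := by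
        ext f; exact hemb_counit f
      have h3 : S15.contr (emb.flip (1 : 𝒰 g₂)) (covM x) = x := by
        rw [← hcov' 1 x, map_one]
        rfl
      simp only [LinearMap.comp_apply, LinearMap.id_apply, h1]
      exact h3
    · apply LinearMap.ext; intro x
      apply S15.sep2_eq emb hemb_inj
      intro v w
      have hL : S15.contr (S15.pair2 (emb.flip v) (emb.flip w))
          ((TensorProduct.assoc ℂ M F F) ((LinearMap.rTensor F covM) (covM x)))
          = ρU v (ρU w x) := by
        rw [S15.contr_pair2_assoc, ← hcov' w x, ← hcov' v (ρU w x)]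
      have hR : S15.contr (S15.pair2 (emb.flip v) (emb.flip w))
          ((LinearMap.lTensor M (Coalgebra.comul (R := ℂ) (A := F))) (covM x))
          = ρU v (ρU w x) := by
        rw [S15.contr_lTensor, S15.pair2_comul emb (Coalgebra.comul (R := ℂ) (A := F))
          hemb_comul v w, ← hcov' (v * w) x, map_mul]
        rfl
      simp only [LinearMap.comp_apply, LinearEquiv.coe_coe]
      exact hL.trans hR.symm
    · intro X x
      apply S15.sep1_eq emb hemb_inj
      intro v
      have hL : S15.contr (emb.flip v) (covM (ρa (ea.symm (X, 0)) x)) = ρU v (BL X x) := by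
        rw [← hBL X, ← hcov']
      have hbig := S15.big b emb comul₂.toLinearMap hemb_mul ρ.toLinearMap BL covF φF hφF
        hφF_pair v X (covM x)
      have hKcov := S15.K_cov BL ρ.toLinearMap emb ρU.toLinearMap covM hcov'
        (comul₂.toLinearMap v) X x
      have hact : S15.contr (emb.flip v) ((LinearMap.lTensor M (actF X)) (covM x))
          = ρU (Dact v X) x := by
        rw [S15.contr_lTensor]
        have hfa : (emb.flip v) ∘ₗ (actF X) = emb.flip (Dact v X) := by
          ext f
          simp [hactF]
        rw [hfa, ← hcov']
      have hMI := LinearMap.congr_fun (MI v X) x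
      simp only [LinearMap.comp_apply, LinearMap.add_apply] at hMI
      rw [map_add, hL, hbig, hKcov, hact]
      simp only [AlgHom.toLinearMap_apply]
      exact hMI
  · -- converse direction
    intro N instAG instMod ρN covN hcu hca hcompat
    set ρUlin : (𝒰 g₂) →ₗ[ℂ] Module.End ℂ N :=
      ((LinearMap.llcomp ℂ N (N ⊗[ℂ] F) N).flip covN) ∘ₗ S15.contrE emb with hρUlin
    have happ : ∀ (v : 𝒰 g₂) (x : N), ρUlin v x = S15.contr (emb.flip v) (covN x) :=
      fun v x => rfl
    have hone : ρUlin 1 = 1 := by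
      ext x
      have h1 : (emb.flip (1 : 𝒰 g₂)) = Coalgebra.counit (R := ℂ) (A := F) := by
        ext f; exact (hemb_counit f).symm
      have h2 := LinearMap.congr_fun hcu x
      simp only [LinearMap.comp_apply, LinearMap.id_apply] at h2
      calc ρUlin 1 x = S15.contr (emb.flip (1 : 𝒰 g₂)) (covN x) := rfl
        _ = S15.contr (Coalgebra.counit (R := ℂ) (A := F)) (covN x) := by rw [h1]
        _ = x := h2
        _ = (1 : Module.End ℂ N) x := rfl
    have hmulU : ∀ v w : 𝒰 g₂, ρUlin (v * w) = ρUlin v * ρUlin w := by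
      intro v w
      ext x
      have hca' := LinearMap.congr_fun hca x
      simp only [LinearMap.comp_apply, LinearEquiv.coe_coe] at hca'
      calc ρUlin (v * w) x = S15.contr (emb.flip (v * w)) (covN x) := rfl
        _ = S15.contr (S15.pair2 (emb.flip v) (emb.flip w))
              ((LinearMap.lTensor N (Coalgebra.comul (R := ℂ) (A := F))) (covN x)) := by
            rw [S15.contr_lTensor, S15.pair2_comul emb (Coalgebra.comul (R := ℂ) (A := F))
              hemb_comul v w]
        _ = S15.contr (S15.pair2 (emb.flip v) (emb.flip w))
              ((TensorProduct.assoc ℂ N F F) ((LinearMap.rTensor F covN) (covN x))) := by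
            rw [hca']
        _ = S15.contr (emb.flip v) (covN (S15.contr (emb.flip w) (covN x))) :=
            S15.contr_pair2_assoc _ _ _ _
        _ = (ρUlin v * ρUlin w) x := rfl
    have hMI : ∀ (v : 𝒰 g₂) (X : g₁) (x : N),
        ρUlin v (ρN X x) =
          S15.K ρN.toLinearMap ρ.toLinearMap ρUlin (comul₂ v) X x + ρUlin (Dact v X) x := by
      intro v X x
      have hbig := S15.big b emb comul₂.toLinearMap hemb_mul ρ.toLinearMap ρN.toLinearMap
        covF φF hφF hφF_pair v X (covN x)
      have hKcov := S15.K_cov ρN.toLinearMap ρ.toLinearMap emb ρUlin covN happ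
        (comul₂.toLinearMap v) X x
      have hact : S15.contr (emb.flip v) ((LinearMap.lTensor N (actF X)) (covN x))
          = ρUlin (Dact v X) x := by
        rw [S15.contr_lTensor]
        have hfa : (emb.flip v) ∘ₗ (actF X) = emb.flip (Dact v X) := by
          ext f
          simp [hactF]
        rw [hfa]
        rfl
      have h0 : ρUlin v (ρN X x) = S15.contr (emb.flip v) (covN (ρN X x)) := rfl
      rw [h0, hcompat X x, map_add, hbig, hKcov, hact]
      simp only [AlgHom.toLinearMap_apply]
    have R3 : ∀ (ζ : g₂) (X : g₁),
        ρUlin (UniversalEnvelopingAlgebra.ι ℂ ζ) * (ρN X : Module.End ℂ N) =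
          (ρN (uact ζ X) : Module.End ℂ N)
            + (ρN X : Module.End ℂ N) * ρUlin (UniversalEnvelopingAlgebra.ι ℂ ζ)
            + ρUlin (UniversalEnvelopingAlgebra.ι ℂ (dact ζ X)) := by
      intro ζ X
      ext x
      have h := hMI (UniversalEnvelopingAlgebra.ι ℂ ζ) X x
      rw [hcomul₂ ζ] at h
      simp only [map_add, LinearMap.add_apply, S15.K_tmul, AlgHom.toLinearMap_apply,
        LieHom.coe_toLinearMap, map_one, Module.End.one_apply, hρ, hDact_gen, hone] at h
      simpa [Module.End.mul_apply] using h
    set ρalin : a →ₗ[ℂ] Module.End ℂ N :=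
      (ρN.toLinearMap ∘ₗ LinearMap.fst ℂ g₁ g₂
        + ρUlin ∘ₗ (UniversalEnvelopingAlgebra.ι ℂ (L := g₂)).toLinearMap
            ∘ₗ LinearMap.snd ℂ g₁ g₂) ∘ₗ ea.toLinearMap with hρalin
    have happ2 : ∀ w : a, ρalin w =
        (ρN (ea w).1 : Module.End ℂ N)
          + ρUlin (UniversalEnvelopingAlgebra.ι ℂ (ea w).2) := fun w => rfl
    have hgen2 : ∀ ζ : g₂, ρalin (ea.symm (0, ζ))
        = ρUlin (UniversalEnvelopingAlgebra.ι ℂ ζ) := by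
      intro ζ
      rw [happ2]
      simp
    have hlie : ∀ y z : a, ρalin ⁅y, z⁆ = ⁅ρalin y, ρalin z⁆ := by
      intro y z
      rw [happ2 ⁅y, z⁆, happ2 y, happ2 z, hbracket y z, Ring.lie_def]
      dsimp only
      have R1 : (ρN ⁅(ea y).1, (ea z).1⁆ : Module.End ℂ N)
          = ρN (ea y).1 * ρN (ea z).1 - ρN (ea z).1 * ρN (ea y).1 := by
        rw [LieHom.map_lie, Ring.lie_def]
      have R2 : ρUlin (UniversalEnvelopingAlgebra.ι ℂ ⁅(ea y).2, (ea z).2⁆)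
          = ρUlin (UniversalEnvelopingAlgebra.ι ℂ (ea y).2)
              * ρUlin (UniversalEnvelopingAlgebra.ι ℂ (ea z).2)
            - ρUlin (UniversalEnvelopingAlgebra.ι ℂ (ea z).2)
              * ρUlin (UniversalEnvelopingAlgebra.ι ℂ (ea y).2) := by
        rw [LieHom.map_lie, Ring.lie_def, map_sub, hmulU, hmulU]
      have R3y : (ρN (uact (ea y).2 (ea z).1) : Module.End ℂ N)
          = ρUlin (UniversalEnvelopingAlgebra.ι ℂ (ea y).2) * ρN (ea z).1
            - ρN (ea z).1 * ρUlin (UniversalEnvelopingAlgebra.ι ℂ (ea y).2)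
            - ρUlin (UniversalEnvelopingAlgebra.ι ℂ (dact (ea y).2 (ea z).1)) := by
        rw [R3]
        abel
      have R3z : (ρN (uact (ea z).2 (ea y).1) : Module.End ℂ N)
          = ρUlin (UniversalEnvelopingAlgebra.ι ℂ (ea z).2) * ρN (ea y).1
            - ρN (ea y).1 * ρUlin (UniversalEnvelopingAlgebra.ι ℂ (ea z).2)
            - ρUlin (UniversalEnvelopingAlgebra.ι ℂ (dact (ea z).2 (ea y).1)) := by
        rw [R3]
        abel
      simp only [map_add, map_sub]
      rw [R1, R2, R3y, R3z]
      noncomm_ring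
    refine ⟨{ toLinearMap := ρalin, map_lie' := fun {y z} => hlie y z },
      AlgHom.ofLinearMap ρUlin hone hmulU, ?_, ?_, ?_, ?_⟩
    · intro X x
      show ρalin (ea.symm (X, 0)) x = ρN X x
      rw [happ2]
      simp
    · intro ζ
      show ρUlin (UniversalEnvelopingAlgebra.ι ℂ ζ) = ρalin (ea.symm (0, ζ))
      rw [hgen2]
    · intro x
      classical
      obtain ⟨S, hS⟩ := TensorProduct.exists_finset (covN x)
      refine ⟨LinearMap.range (ρUlin.flip x), ⟨1, ?_⟩, ?_, ?_⟩
      · show ρUlin 1 x = x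
        rw [hone]
        rfl
      · have hle : LinearMap.range (ρUlin.flip x)
            ≤ Submodule.span ℂ (Prod.fst '' (S : Set (N × F))) := by
          rintro _ ⟨v, rfl⟩
          have hv : ρUlin.flip x v = S15.contr (emb.flip v) (covN x) := rfl
          rw [hv, hS, map_sum]
          apply Submodule.sum_mem
          intro p hp
          rw [S15.contr_tmul]
          exact Submodule.smul_mem _ _ (Submodule.subset_span ⟨p, hp, rfl⟩)
        have : FiniteDimensional ℂ (Submodule.span ℂ (Prod.fst '' (S : Set (N × F)))) :=
          FiniteDimensional.span_of_finite ℂ ((S : Set (N × F)).toFinite.image _)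
        exact Submodule.finiteDimensional_of_le hle
      · intro ζ w hw
        obtain ⟨v, rfl⟩ := hw
        refine ⟨UniversalEnvelopingAlgebra.ι ℂ ζ * v, ?_⟩
        show ρUlin (UniversalEnvelopingAlgebra.ι ℂ ζ * v) x = _
        rw [hmulU]
        show ρUlin (UniversalEnvelopingAlgebra.ι ℂ ζ) (ρUlin v x)
          = ρalin (ea.symm (0, ζ)) (ρUlin.flip x v)
        rw [hgen2]
        rfl
    · intro v x
      rfl
end
end
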